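/- Let a, b be positive integers, let (U_n) be a non-degenerate linear recurrence sequence of integers of order k ≥ 2 whose first coefficient f₁ is a nonzero constant η₁ and which has dominant root α₁, let ε > 0 and r ≥ 1, and order the roots so that |α₂| = max_{2≤j≤t}|α_j|. Then there exists an (effectively computable) constant c, depending only on ε, γ, k, r, a, b, such that for every (n, m, z₁,…,z_r) with n ≥ m ≥ 1, z₁,…,z_r ∈ 𝒰_S, aU_n + bU_m = z₁ + ⋯ + z_r, |z_i|^{1+ε} ≤ |z_r| for 1 ≤ i ≤ r−1, f_j(n) ≠ 0 and f_j(m) ≠ 0 for 2 ≤ j ≤ t, and |aU_n + bU_m| > (1/2)|η₁|α₁ⁿ, one has |η₁·α₁ⁿ·(a + b·α₁^{m−n})·z_r^{−1} − 1| ≤ c·n^{k−1}·N^{n}, where N = max(α₁^{−ε/(1+ε)}, |α₂|/α₁). -/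

import Mathlib

open scoped BigOperators

/-- `z` is an `S`-unit for the finite set of primes `p 0, …, p (L-1)`:
`z = ± p₁^{e₁} ⋯ p_L^{e_L}` with nonnegative integer exponents. -/
def IsSUnit {L : ℕ} (p : Fin L → ℕ) (z : ℤ) : Prop :=
  ∃ (e : Fin L → ℕ) (s : ℤ), (s = 1 ∨ s = -1) ∧ z = s * ∏ i, (p i : ℤ) ^ e i

private lemma eval_bound' (P : Polynomial ℂ) (d : ℕ) (hd : P.natDegree ≤ d) (x : ℂ)
    (hx : 1 ≤ ‖x‖) :
    ‖P.eval x‖ ≤ (∑ i ∈ Finset.range (d+1), ‖P.coeff i‖) * ‖x‖ ^ d := by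
  rw [Polynomial.eval_eq_sum_range' (Nat.lt_succ_of_le hd)]
  refine (norm_sum_le _ _).trans ?_
  rw [Finset.sum_mul]
  refine Finset.sum_le_sum fun i hi => ?_
  rw [norm_mul, norm_pow]
  exact mul_le_mul_of_nonneg_left
    (pow_le_pow_right₀ hx (Nat.lt_succ_iff.mp (Finset.mem_range.mp hi)))
    (norm_nonneg _)

set_option maxHeartbeats 1000000 in
theorem Phi2_upper_bound
    (k t : ℕ) (hk : 2 ≤ k) (ht : 0 < t)
    (c : Fin k → ℤ) (hck : c ⟨k - 1, by omega⟩ ≠ 0)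
    (U : ℕ → ℤ)
    (hrec : ∀ n : ℕ, U (n + k) = ∑ i : Fin k, c i * U (n + k - 1 - (i : ℕ)))
    (hinit : ∃ j : Fin k, U (j : ℕ) ≠ 0)
    (α : Fin t → ℂ) (hα : Function.Injective α)
    (mult : Fin t → ℕ) (hmult : ∀ i, 0 < mult i)
    (hchar : (Polynomial.X ^ k -
        ∑ i : Fin k, Polynomial.C ((c i : ℂ)) * Polynomial.X ^ (k - 1 - (i : ℕ)))
      = ∏ i : Fin t, (Polynomial.X - Polynomial.C (α i)) ^ (mult i))
    (f : Fin t → Polynomial ℂ) (hf0 : ∀ i, f i ≠ 0)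
    (hfdeg : ∀ i, (f i).natDegree < mult i)
    (hrep : ∀ n : ℕ, (U n : ℂ) = ∑ i : Fin t, (f i).eval (n : ℂ) * α i ^ n)
    (hnondeg : ∀ i j : Fin t, i ≠ j → ∀ N : ℕ, 0 < N → (α i / α j) ^ N ≠ 1)
    (A : ℝ) (hA : (A : ℂ) = α ⟨0, ht⟩) (hA1 : 1 < A)
    (hdom : ∀ j : Fin t, j ≠ ⟨0, ht⟩ → ‖α j‖ < A)
    (η : ℂ) (hη : η ≠ 0) (hf1 : f ⟨0, ht⟩ = Polynomial.C η)
    (ht2 : 2 ≤ t)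
    (hmax2 : ∀ j : Fin t, j ≠ ⟨0, ht⟩ → ‖α j‖ ≤ ‖α ⟨1, by omega⟩‖)
    (L : ℕ) (p : Fin L → ℕ) (hp : ∀ i, (p i).Prime) (hpinj : Function.Injective p)
    (a b : ℕ) (ha : 0 < a) (hb : 0 < b)
    (ε : ℝ) (hε : 0 < ε) (r : ℕ) (hr : 1 ≤ r) :
    ∃ C : ℝ, ∀ (n m : ℕ) (z : Fin r → ℤ),
      1 ≤ m → m ≤ n →
      (∀ i, IsSUnit p (z i)) →
      ((a : ℤ) * U n + (b : ℤ) * U m = ∑ i, z i) →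
      (∀ i : Fin r, (i : ℕ) < r - 1 →
        ((|z i| : ℝ)) ^ (1 + ε) ≤ ((|z ⟨r - 1, by omega⟩| : ℝ))) →
      (∀ j : Fin t, j ≠ ⟨0, ht⟩ → (f j).eval (n : ℂ) ≠ 0) →
      (∀ j : Fin t, j ≠ ⟨0, ht⟩ → (f j).eval (m : ℂ) ≠ 0) →
      ((|(a : ℤ) * U n + (b : ℤ) * U m| : ℝ)) > (1 / 2) * ‖η‖ * A ^ n →
      ‖η * (A : ℂ) ^ n * ((a : ℂ) + (b : ℂ) * (A : ℂ) ^ ((m : ℤ) - (n : ℤ)))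
          * ((z ⟨r - 1, by omega⟩ : ℤ) : ℂ)⁻¹ - 1‖
        ≤ C * (n : ℝ) ^ (k - 1) *
          (max (A ^ (-(ε / (1 + ε)))) (‖α ⟨1, by omega⟩‖ / A)) ^ n := by
  classical
  have hA0 : (0:ℝ) < A := lt_trans one_pos hA1
  -- degrees
  have hsum_mult : ∑ i : Fin t, mult i ≤ k := by
    have h1 : (∏ i : Fin t, (Polynomial.X - Polynomial.C (α i)) ^ (mult i)).natDegree
        = ∑ i : Fin t, mult i := by
      rw [Polynomial.natDegree_prod]
      · simp [Polynomial.natDegree_pow, Polynomial.natDegree_X_sub_C]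
      · intro i _
        exact pow_ne_zero _ (Polynomial.X_sub_C_ne_zero _)
    rw [← hchar] at h1
    rw [← h1]
    refine le_trans (Polynomial.natDegree_sub_le _ _) ?_
    simp only [max_le_iff, Polynomial.natDegree_X_pow]
    refine ⟨le_refl _, le_trans (Polynomial.natDegree_sum_le _ _) ?_⟩
    refine Finset.sup_le fun i _ => ?_
    refine le_trans (Polynomial.natDegree_C_mul_le _ _) ?_
    simp [Polynomial.natDegree_X_pow]
    omega
  have hdegf : ∀ j, (f j).natDegree ≤ k - 1 := by
    intro j
    have h1 := hfdeg j
    have h2 : mult j ≤ k :=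
      le_trans (Finset.single_le_sum (fun i _ => Nat.zero_le _) (Finset.mem_univ j)) hsum_mult
    omega
  -- opaque constants
  obtain ⟨Cf, hCf⟩ : ∃ g : Fin t → ℝ,
      g = fun j => ∑ i ∈ Finset.range k, ‖(f j).coeff i‖ := ⟨_, rfl⟩
  have hCf0 : ∀ j, 0 ≤ Cf j := by
    intro j; rw [hCf]
    exact Finset.sum_nonneg fun i _ => norm_nonneg _
  have heval : ∀ (j : Fin t) (N : ℕ), 1 ≤ N →
      ‖(f j).eval (N:ℂ)‖ ≤ Cf j * (N:ℝ)^(k-1) := by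
    intro j N hN
    have hx : (1:ℝ) ≤ ‖(N:ℂ)‖ := by
      rw [Complex.norm_natCast]; exact_mod_cast hN
    have h := eval_bound' (f j) (k-1) (hdegf j) (N:ℂ) hx
    rw [Complex.norm_natCast] at h
    have hkk : k - 1 + 1 = k := by omega
    rw [hkk] at h
    rw [hCf]
    exact h
  have hηa : 0 < ‖η‖ := norm_pos_iff.mpr hη
  obtain ⟨B, hB⟩ : ∃ x : ℝ, x = ‖α ⟨1, by omega⟩‖ := ⟨_, rfl⟩
  have hi10 : (⟨1, by omega⟩ : Fin t) ≠ (⟨0, ht⟩ : Fin t) := by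
    intro h; exact absurd (congrArg Fin.val h) (by simp)
  have hB0 : 0 ≤ B := hB ▸ norm_nonneg _
  have hBA : B < A := hB ▸ hdom _ hi10
  have hmax2' : ∀ j : Fin t, j ≠ ⟨0, ht⟩ → ‖α j‖ ≤ B := by
    intro j hj; rw [hB]; exact hmax2 j hj
  obtain ⟨δ, hδ⟩ : ∃ x : ℝ, x = ε / (1 + ε) := ⟨_, rfl⟩
  have h1ε : (0:ℝ) < 1 + ε := by linarith
  have hδ0 : 0 < δ := hδ ▸ div_pos hε h1ε
  have hδ1 : δ ≤ 1 := by
    rw [hδ, div_le_one h1ε]; linarith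
  obtain ⟨N, hN⟩ : ∃ x : ℝ,
      x = max (A ^ (-(ε / (1 + ε)))) (‖α ⟨1, by omega⟩‖ / A) := ⟨_, rfl⟩
  have hNd : N = max (A ^ (-δ)) (B / A) := by rw [hN, hδ, hB]
  have hN0 : 0 ≤ N := by
    rw [hNd]
    exact le_trans (Real.rpow_nonneg (le_of_lt hA0) _) (le_max_left _ _)
  have hAδN : A ^ (-δ) ≤ N := hNd ▸ le_max_left _ _
  have hAδ0 : 0 ≤ A ^ (-δ) := Real.rpow_nonneg (le_of_lt hA0) _
  obtain ⟨CR, hCR⟩ : ∃ x : ℝ, x = ((a:ℝ)+b) * ∑ j, Cf j := ⟨_, rfl⟩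
  have hCR0 : 0 ≤ CR := by
    rw [hCR]
    exact mul_nonneg (by positivity) (Finset.sum_nonneg fun j _ => hCf0 j)
  obtain ⟨C1, hC1⟩ : ∃ x : ℝ, x = (r:ℝ) * (‖η‖/(2*r))^(-δ) := ⟨_, rfl⟩
  obtain ⟨C2, hC2⟩ : ∃ x : ℝ, x = (2*r/‖η‖) * CR := ⟨_, rfl⟩
  have hrpos : (0:ℝ) < r := by exact_mod_cast hr
  have hC10 : 0 ≤ C1 := by
    rw [hC1]
    exact mul_nonneg (le_of_lt hrpos) (Real.rpow_nonneg (by positivity) _)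
  have hC20 : 0 ≤ C2 := by
    rw [hC2]
    exact mul_nonneg (by positivity) hCR0
  refine ⟨C1 + C2, ?_⟩
  intro n m z hm hmn hSz hsum hsmall hfn hfm hbig
  rw [← hN]
  have hn1 : 1 ≤ n := le_trans hm hmn
  have hn1R : (1:ℝ) ≤ (n:ℝ) := by exact_mod_cast hn1
  have hnk1 : (1:ℝ) ≤ (n:ℝ)^(k-1) := one_le_pow₀ hn1R
  set r0 : Fin r := ⟨r - 1, by omega⟩ with hr0def
  -- basic facts on z
  have hz1 : ∀ i, (1:ℤ) ≤ |z i| := by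
    intro i
    obtain ⟨e, s, hs, hz⟩ := hSz i
    have hprod : (1:ℤ) ≤ ∏ j, (p j : ℤ) ^ e j := by
      calc (1:ℤ) = ∏ _j : Fin L, 1 := Finset.prod_const_one.symm
        _ ≤ ∏ j, (p j : ℤ) ^ e j :=
          Finset.prod_le_prod (fun _ _ => zero_le_one)
            (fun j _ => one_le_pow₀
              (show (1:ℤ) ≤ (p j : ℤ) by exact_mod_cast (hp j).one_lt.le))
    have hPnn : (0:ℤ) ≤ ∏ j, (p j : ℤ) ^ e j := le_trans zero_le_one hprod
    have habs : |z i| = ∏ j, (p j : ℤ) ^ e j := by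
      rcases hs with h | h <;> simp [hz, h, abs_mul, abs_of_nonneg hPnn]
    rw [habs]; exact hprod
  have hzr1 : (1:ℝ) ≤ (|z r0| : ℝ) := by exact_mod_cast hz1 r0
  have hzrpos : (0:ℝ) < (|z r0| : ℝ) := lt_of_lt_of_le one_pos hzr1
  have hzrne : ((z r0 : ℤ) : ℂ) ≠ 0 := by
    intro h
    have h2 : z r0 = 0 := by exact_mod_cast h
    have h3 := hz1 r0
    rw [h2] at h3; simp at h3
  -- each |z i| ≤ |z r0|
  have hzle : ∀ i, (|z i| : ℝ) ≤ (|z r0| : ℝ) := by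
    intro i
    by_cases hi : (i : ℕ) < r - 1
    · have h1 := hsmall i hi
      have hb1 : (1:ℝ) ≤ (|z i| : ℝ) := by exact_mod_cast hz1 i
      calc (|z i| : ℝ) = (|z i| : ℝ) ^ (1:ℝ) := (Real.rpow_one _).symm
        _ ≤ (|z i| : ℝ) ^ (1+ε) := Real.rpow_le_rpow_of_exponent_le hb1 (by linarith)
        _ ≤ (|z r0| : ℝ) := h1
    · have h2 := i.isLt
      have hieq : i = r0 := by
        apply Fin.ext
        show (i:ℕ) = r - 1
        omega
      rw [hieq]
  -- lower bound on |z r0|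
  have hZlb : ‖η‖ * A ^ n / (2*r) ≤ (|z r0| : ℝ) := by
    have hzleZ : ∀ i, |z i| ≤ |z r0| := by
      intro i; exact_mod_cast hzle i
    have hZ2 : |(a:ℤ) * U n + (b:ℤ) * U m| ≤ (r:ℤ) * |z r0| := by
      rw [hsum]
      refine le_trans (Finset.abs_sum_le_sum_abs z Finset.univ) ?_
      calc ∑ i, |z i| ≤ ∑ _i : Fin r, |z r0| := Finset.sum_le_sum fun i _ => hzleZ i
        _ = (r:ℤ) * |z r0| := by simp [mul_comm]
    have h1 : |((a:ℤ):ℝ) * ((U n : ℤ):ℝ) + ((b:ℤ):ℝ) * ((U m : ℤ):ℝ)|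
        ≤ (r:ℝ) * (|z r0| : ℝ) := by exact_mod_cast hZ2
    have h2 : (1/2) * ‖η‖ * A ^ n < (r:ℝ) * (|z r0| : ℝ) := by
      refine lt_of_lt_of_le ?_ h1
      convert hbig using 2 <;> push_cast <;> ring
    rw [div_le_iff₀ (by positivity)]
    nlinarith [hzrpos]
  -- the splitting identity for U
  have hsplit : ∀ N : ℕ, (U N : ℂ)
      = η * (A:ℂ)^N + ∑ j ∈ Finset.univ.erase ⟨0, ht⟩, (f j).eval (N:ℂ) * α j ^ N := by
    intro N
    rw [hrep N, ← Finset.add_sum_erase _ _ (Finset.mem_univ (⟨0, ht⟩ : Fin t)), hf1,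
      Polynomial.eval_C, hA]
  have hACne : (A:ℂ) ≠ 0 := by
    simp only [ne_eq, Complex.ofReal_eq_zero]; linarith
  have hAm : (A:ℂ)^n * (A:ℂ)^((m:ℤ)-(n:ℤ)) = (A:ℂ)^m := by
    rw [← zpow_natCast (A:ℂ) n, ← zpow_natCast (A:ℂ) m, ← zpow_add₀ hACne]
    congr 1; omega
  obtain ⟨R, hR⟩ : ∃ x : ℂ, x =
      (a:ℂ) * ∑ j ∈ Finset.univ.erase (⟨0, ht⟩ : Fin t), (f j).eval (n:ℂ) * α j ^ n
      + (b:ℂ) * ∑ j ∈ Finset.univ.erase (⟨0, ht⟩ : Fin t), (f j).eval (m:ℂ) * α j ^ m :=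
    ⟨_, rfl⟩
  have key : η * (A:ℂ)^n * ((a:ℂ) + (b:ℂ) * (A:ℂ)^((m:ℤ)-(n:ℤ)))
      = (((a:ℤ) * U n + (b:ℤ) * U m : ℤ) : ℂ) - R := by
    have hlhs : η * (A:ℂ)^n * ((a:ℂ) + (b:ℂ) * (A:ℂ)^((m:ℤ)-(n:ℤ)))
        = (a:ℂ)*(η*(A:ℂ)^n) + (b:ℂ)*(η*(A:ℂ)^m) := by
      rw [← hAm]; ring
    rw [hlhs]
    push_cast
    rw [hsplit n, hsplit m, hR]
    ring
  -- rewrite main quantity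
  have hsumC : (((a:ℤ) * U n + (b:ℤ) * U m : ℤ) : ℂ) = ∑ i, ((z i : ℤ) : ℂ) := by
    rw [hsum]; push_cast; ring
  have hzsplit : (∑ i, ((z i : ℤ) : ℂ))
      = ((z r0 : ℤ) : ℂ) + ∑ i ∈ Finset.univ.erase r0, ((z i : ℤ) : ℂ) :=
    (Finset.add_sum_erase _ _ (Finset.mem_univ r0)).symm
  obtain ⟨S', hS'⟩ : ∃ x : ℂ, x = ∑ i ∈ Finset.univ.erase r0, ((z i : ℤ) : ℂ) := ⟨_, rfl⟩
  have hmain : η * (A:ℂ)^n * ((a:ℂ) + (b:ℂ) * (A:ℂ)^((m:ℤ)-(n:ℤ))) * ((z r0 : ℤ) : ℂ)⁻¹ - 1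
      = (S' - R) * ((z r0 : ℤ) : ℂ)⁻¹ := by
    have hone : (1:ℂ) = ((z r0 : ℤ) : ℂ) * ((z r0 : ℤ) : ℂ)⁻¹ := (mul_inv_cancel₀ hzrne).symm
    rw [key, hsumC, hzsplit, hone, hS']
    ring
  -- abs computations
  have habszr : ‖((z r0 : ℤ) : ℂ)‖ = (|z r0| : ℝ) := Complex.norm_intCast _
  have hboundS' : ‖S'‖ ≤ (r:ℝ) * (|z r0| : ℝ) ^ ((1:ℝ)/(1+ε)) := by
    rw [hS']
    refine le_trans (norm_sum_le _ _) ?_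
    have hterm : ∀ i ∈ Finset.univ.erase r0,
        ‖((z i : ℤ) : ℂ)‖ ≤ (|z r0| : ℝ) ^ ((1:ℝ)/(1+ε)) := by
      intro i hi
      have hir : i ≠ r0 := Finset.ne_of_mem_erase hi
      have hilt : (i : ℕ) < r - 1 := by
        have h1 := i.isLt
        have h2 : (i : ℕ) ≠ r - 1 := fun h => hir (Fin.ext (by simp [hr0def, h]))
        omega
      have h1 := hsmall i hilt
      have habsz : ‖((z i : ℤ) : ℂ)‖ = (|z i| : ℝ) := Complex.norm_intCast _
      rw [habsz]
      have hnn : (0:ℝ) ≤ (|z i| : ℝ) := by positivity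
      calc (|z i| : ℝ) = ((|z i| : ℝ) ^ (1+ε)) ^ ((1:ℝ)/(1+ε)) := by
            rw [← Real.rpow_mul hnn, mul_one_div, div_self (ne_of_gt h1ε), Real.rpow_one]
        _ ≤ (|z r0| : ℝ) ^ ((1:ℝ)/(1+ε)) :=
            Real.rpow_le_rpow (Real.rpow_nonneg hnn _) h1 (by positivity)
    refine le_trans (Finset.sum_le_sum hterm) ?_
    rw [Finset.sum_const, nsmul_eq_mul]
    refine mul_le_mul_of_nonneg_right ?_ (Real.rpow_nonneg (by positivity) _)
    rw [Finset.card_erase_of_mem (Finset.mem_univ r0)]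
    simp only [Finset.card_univ, Fintype.card_fin]
    exact_mod_cast Nat.sub_le r 1
  -- term 1
  have hterm1 : ‖S'‖ / (|z r0| : ℝ) ≤ C1 * (A ^ (-δ)) ^ n := by
    have hexp : (|z r0| : ℝ) ^ ((1:ℝ)/(1+ε)) = (|z r0| : ℝ) ^ (-δ) * (|z r0| : ℝ) := by
      rw [← Real.rpow_add_one (ne_of_gt hzrpos)]
      congr 1
      rw [hδ]
      field_simp
      ring
    have h1 : ‖S'‖ / (|z r0| : ℝ) ≤ (r:ℝ) * (|z r0| : ℝ) ^ (-δ) := by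
      rw [div_le_iff₀ hzrpos]
      calc ‖S'‖ ≤ (r:ℝ) * (|z r0| : ℝ) ^ ((1:ℝ)/(1+ε)) := hboundS'
        _ = (r:ℝ) * (|z r0| : ℝ) ^ (-δ) * (|z r0| : ℝ) := by rw [hexp]; ring
    refine le_trans h1 ?_
    rw [hC1, mul_assoc]
    refine mul_le_mul_of_nonneg_left ?_ (le_of_lt hrpos)
    have hW : (0:ℝ) < ‖η‖ * A ^ n / (2*r) := by positivity
    have h2 : (|z r0| : ℝ) ^ (-δ) ≤ (‖η‖ * A ^ n / (2*r)) ^ (-δ) := by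
      rw [Real.rpow_neg (le_of_lt hzrpos), Real.rpow_neg (le_of_lt hW)]
      refine inv_anti₀ (Real.rpow_pos_of_pos hW _) ?_
      exact Real.rpow_le_rpow (le_of_lt hW) hZlb (le_of_lt hδ0)
    refine le_trans h2 ?_
    have h3 : ‖η‖ * A ^ n / (2*r) = (‖η‖/(2*r)) * A ^ n := by ring
    rw [h3, Real.mul_rpow (by positivity) (by positivity)]
    have h4 : ((A:ℝ) ^ n) ^ (-δ) = (A ^ (-δ)) ^ n := by
      rw [← Real.rpow_natCast A n, ← Real.rpow_mul (le_of_lt hA0),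
        mul_comm, Real.rpow_mul (le_of_lt hA0), Real.rpow_natCast]
    rw [h4]
  -- bound on R
  have hM0 : (0:ℝ) ≤ max 1 B := le_trans zero_le_one (le_max_left _ _)
  have hBM : ∀ j ∈ Finset.univ.erase (⟨0, ht⟩ : Fin t), ∀ N : ℕ, N ≤ n →
      ‖α j ^ N‖ ≤ (max 1 B) ^ n := by
    intro j hj N hN
    have hjne : j ≠ (⟨0, ht⟩ : Fin t) := Finset.ne_of_mem_erase hj
    have h1 : ‖α j‖ ≤ B := hmax2' j hjne
    rw [norm_pow]
    calc ‖α j‖ ^ N ≤ (max 1 B) ^ N :=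
          pow_le_pow_left₀ (norm_nonneg _) (le_trans h1 (le_max_right _ _)) _
      _ ≤ (max 1 B) ^ n := pow_le_pow_right₀ (le_max_left _ _) hN
  have hnn0 : (0:ℝ) ≤ (n:ℝ) := by positivity
  have hboundR : ‖R‖ ≤ CR * (n:ℝ)^(k-1) * (max 1 B) ^ n := by
    have htn : ∀ j ∈ Finset.univ.erase (⟨0, ht⟩ : Fin t),
        ‖(f j).eval (n:ℂ) * α j ^ n‖ ≤ Cf j * (n:ℝ)^(k-1) * (max 1 B)^n := by
      intro j hj
      rw [norm_mul]
      exact mul_le_mul (heval j n hn1) (hBM j hj n le_rfl) (norm_nonneg _)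
        (mul_nonneg (hCf0 j) (pow_nonneg hnn0 _))
    have htm : ∀ j ∈ Finset.univ.erase (⟨0, ht⟩ : Fin t),
        ‖(f j).eval (m:ℂ) * α j ^ m‖ ≤ Cf j * (n:ℝ)^(k-1) * (max 1 B)^n := by
      intro j hj
      rw [norm_mul]
      have hev : ‖(f j).eval (m:ℂ)‖ ≤ Cf j * (n:ℝ)^(k-1) := by
        refine le_trans (heval j m hm) ?_
        exact mul_le_mul_of_nonneg_left
          (pow_le_pow_left₀ (by positivity) (by exact_mod_cast hmn) _) (hCf0 j)
      exact mul_le_mul hev (hBM j hj m hmn) (norm_nonneg _)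
        (mul_nonneg (hCf0 j) (pow_nonneg hnn0 _))
    have hTbound : ∑ j ∈ Finset.univ.erase (⟨0, ht⟩ : Fin t),
          (Cf j * (n:ℝ)^(k-1) * (max 1 B)^n)
        ≤ (∑ j, Cf j) * ((n:ℝ)^(k-1) * (max 1 B)^n) := by
      have h1 : ∑ j ∈ Finset.univ.erase (⟨0, ht⟩ : Fin t),
            (Cf j * (n:ℝ)^(k-1) * (max 1 B)^n)
          = (∑ j ∈ Finset.univ.erase (⟨0, ht⟩ : Fin t), Cf j)
            * ((n:ℝ)^(k-1) * (max 1 B)^n) := by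
        rw [Finset.sum_mul]
        exact Finset.sum_congr rfl fun j _ => by ring
      rw [h1]
      refine mul_le_mul_of_nonneg_right ?_ (by positivity)
      exact Finset.sum_le_sum_of_subset_of_nonneg (Finset.subset_univ _)
        fun j _ _ => hCf0 j
    have hstep : ‖R‖ ≤
        ((a:ℝ) + b) * ∑ j ∈ Finset.univ.erase (⟨0, ht⟩ : Fin t),
          (Cf j * (n:ℝ)^(k-1) * (max 1 B)^n) := by
      rw [hR]
      refine le_trans (norm_add_le _ _) ?_
      rw [norm_mul, norm_mul, Complex.norm_natCast, Complex.norm_natCast, add_mul]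
      refine add_le_add ?_ ?_
      · exact mul_le_mul_of_nonneg_left
          (le_trans (norm_sum_le _ _) (Finset.sum_le_sum htn)) (by positivity)
      · exact mul_le_mul_of_nonneg_left
          (le_trans (norm_sum_le _ _) (Finset.sum_le_sum htm)) (by positivity)
    refine le_trans hstep ?_
    calc ((a:ℝ) + b) * ∑ j ∈ Finset.univ.erase (⟨0, ht⟩ : Fin t),
          (Cf j * (n:ℝ)^(k-1) * (max 1 B)^n)
        ≤ ((a:ℝ) + b) * ((∑ j, Cf j) * ((n:ℝ)^(k-1) * (max 1 B)^n)) :=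
          mul_le_mul_of_nonneg_left hTbound (by positivity)
      _ = CR * (n:ℝ)^(k-1) * (max 1 B)^n := by rw [hCR]; ring
  -- M/A ≤ N
  have hMA : (max 1 B) / A ≤ N := by
    have h1A : A⁻¹ ≤ A ^ (-δ) := by
      rw [← Real.rpow_neg_one A]
      refine Real.rpow_le_rpow_of_exponent_le (le_of_lt hA1) ?_
      linarith
    have h2 : max 1 B / A = max (1 * A⁻¹) (B * A⁻¹) := by
      rw [← max_mul_of_nonneg _ _ (le_of_lt (inv_pos.mpr hA0))]
      rw [div_eq_mul_inv]
    rw [h2, hNd]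
    refine max_le_max ?_ ?_
    · rw [one_mul]; exact h1A
    · rw [div_eq_mul_inv]
  have hMA0 : (0:ℝ) ≤ (max 1 B) / A := div_nonneg hM0 (le_of_lt hA0)
  -- term 2
  have hterm2 : ‖R‖ / (|z r0| : ℝ) ≤ C2 * (n:ℝ)^(k-1) * N^n := by
    have hAn : A ^ n ≤ (2*r/‖η‖) * (|z r0| : ℝ) := by
      have h1 : ‖η‖ * A ^ n ≤ (|z r0| : ℝ) * (2*r) :=
        (div_le_iff₀ (by positivity)).mp hZlb
      rw [div_mul_eq_mul_div, le_div_iff₀ hηa]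
      nlinarith [h1]
    have hMn : ((max 1 B) / A)^n ≤ N^n := pow_le_pow_left₀ hMA0 hMA n
    rw [div_le_iff₀ hzrpos]
    have hApow : (0:ℝ) < A ^ n := pow_pos hA0 n
    calc ‖R‖ ≤ CR * (n:ℝ)^(k-1) * (max 1 B)^n := hboundR
      _ = CR * (n:ℝ)^(k-1) * ((max 1 B)/A)^n * A^n := by
          rw [div_pow]
          field_simp
      _ ≤ CR * (n:ℝ)^(k-1) * N^n * A^n := by
          refine mul_le_mul_of_nonneg_right ?_ (le_of_lt hApow)
          exact mul_le_mul_of_nonneg_left hMn (by positivity)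
      _ ≤ CR * (n:ℝ)^(k-1) * N^n * ((2*r/‖η‖) * (|z r0| : ℝ)) := by
          refine mul_le_mul_of_nonneg_left hAn ?_
          positivity
      _ = C2 * (n:ℝ)^(k-1) * N^n * (|z r0| : ℝ) := by rw [hC2]; ring
  -- assemble
  rw [hmain, norm_mul, norm_inv, habszr]
  have htri : ‖S' - R‖ ≤ ‖S'‖ + ‖R‖ := by
    simpa [sub_eq_add_neg] using norm_add_le S' (-R)
  have hsplit2 : ‖S' - R‖ * (|z r0| : ℝ)⁻¹
      ≤ ‖S'‖ / (|z r0| : ℝ) + ‖R‖ / (|z r0| : ℝ) := by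
    rw [← div_eq_mul_inv, ← add_div]
    gcongr
  refine le_trans hsplit2 ?_
  have hT1 : ‖S'‖ / (|z r0| : ℝ) ≤ C1 * (n:ℝ)^(k-1) * N^n := by
    refine le_trans hterm1 ?_
    have h5 : (A^(-δ))^n ≤ N^n := pow_le_pow_left₀ hAδ0 hAδN n
    have h6 : C1 * (A^(-δ))^n ≤ C1 * N^n := mul_le_mul_of_nonneg_left h5 hC10
    refine le_trans h6 ?_
    have h7 : C1 * N^n * 1 ≤ C1 * N^n * (n:ℝ)^(k-1) :=
      mul_le_mul_of_nonneg_left hnk1 (mul_nonneg hC10 (pow_nonneg hN0 n))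
    calc C1 * N^n = C1 * N^n * 1 := by ring
      _ ≤ C1 * N^n * (n:ℝ)^(k-1) := h7
      _ = C1 * (n:ℝ)^(k-1) * N^n := by ring
  calc ‖S'‖ / (|z r0| : ℝ) + ‖R‖ / (|z r0| : ℝ)
      ≤ C1 * (n:ℝ)^(k-1) * N^n + C2 * (n:ℝ)^(k-1) * N^n := add_le_add hT1 hterm2
    _ = (C1 + C2) * (n:ℝ)^(k-1) * N^n := by ring
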